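/- With A = μ̄(1-μ̲), B = μ̲(1-μ̄), μ̄ + μ̲ > 1: lim_{γ→∞} φ(γ) = μ̄(1-μ̄)/(A+B) < 1/2 = lim_{γ→∞} g(γ), where φ(γ) = (γA-B)(γB-A)/((γ²-1)μ̲(1-μ̲)(A+B)) and g(γ) = (γ-1)/(2(γ+1)). Consequently φ(γ) < g(γ) for all γ ≥ A/B (using that φ/g is increasing and φ(A/B)=0). -/

import Mathlib

set_option maxHeartbeats 1000000 in
/-- With A = μ̄(1-μ̲), B = μ̲(1-μ̄), μ̄ + μ̲ > 1: φ tends to μ̄(1-μ̄)/(A+B) < 1/2,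
g tends to 1/2, and φ(γ) < g(γ) for all γ ≥ A/B. -/
theorem stmt_10 (μl μh : ℝ) (h0 : 0 < μl) (hlh : μl < μh) (h1 : μh < 1)
    (hsum : 1 < μh + μl)
    (A B : ℝ) (hA : A = μh * (1 - μl)) (hB : B = μl * (1 - μh))
    (φ g : ℝ → ℝ)
    (hφ : ∀ γ : ℝ, φ γ = (γ * A - B) * (γ * B - A) / ((γ ^ 2 - 1) * (μl * (1 - μl)) * (A + B)))
    (hg : ∀ γ : ℝ, g γ = (γ - 1) / (2 * (γ + 1))) :
    Filter.Tendsto φ Filter.atTop (nhds (μh * (1 - μh) / (A + B))) ∧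
    μh * (1 - μh) / (A + B) < 1 / 2 ∧
    Filter.Tendsto g Filter.atTop (nhds (1 / 2)) ∧
    ∀ γ : ℝ, A / B ≤ γ → φ γ < g γ := by
  have h1l : 0 < 1 - μl := by linarith
  have h1h : 0 < 1 - μh := by linarith
  have hμl1 : μl < 1 := by linarith
  have hμh0 : 0 < μh := by linarith
  have hBpos : 0 < B := by rw [hB]; positivity
  have hApos : 0 < A := by rw [hA]; positivity
  have hBA : B < A := by rw [hA, hB]; nlinarith
  have hABpos : 0 < A + B := by linarith
  have hDpos : 0 < μl * (1 - μl) := by positivity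
  have h2h : 1 < 2 * μh := by linarith
  have hinv : Filter.Tendsto (fun γ : ℝ => γ⁻¹) Filter.atTop (nhds 0) :=
    tendsto_inv_atTop_zero
  constructor
  · -- φ tendsto
    have hden : (1 - (0:ℝ) ^ 2) * (μl * (1 - μl)) * (A + B) ≠ 0 := by positivity
    have hmain : Filter.Tendsto
        (fun γ : ℝ => (A - B * γ⁻¹) * (B - A * γ⁻¹) /
          ((1 - (γ⁻¹) ^ 2) * (μl * (1 - μl)) * (A + B)))
        Filter.atTop (nhds ((A - B * 0) * (B - A * 0) / ((1 - 0 ^ 2) * (μl * (1 - μl)) * (A + B)))) := by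
      apply Filter.Tendsto.div
      · exact ((tendsto_const_nhds.sub (tendsto_const_nhds.mul hinv)).mul
          (tendsto_const_nhds.sub (tendsto_const_nhds.mul hinv)))
      · exact (((tendsto_const_nhds.sub (hinv.pow 2)).mul tendsto_const_nhds).mul
          tendsto_const_nhds)
      · exact hden
    have heq : ∀ᶠ γ : ℝ in Filter.atTop,
        (A - B * γ⁻¹) * (B - A * γ⁻¹) /
          ((1 - (γ⁻¹) ^ 2) * (μl * (1 - μl)) * (A + B)) = φ γ := by
      filter_upwards [Filter.eventually_gt_atTop 1] with γ hγ
      have hγ0 : γ ≠ 0 := by linarith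
      have h2 : (0:ℝ) < γ⁻¹ := by positivity
      have h3 : γ⁻¹ < 1 := by rw [inv_lt_one_iff₀]; right; exact hγ
      have h4 : (0:ℝ) < 1 - (γ⁻¹) ^ 2 := by nlinarith
      have h5 : (0:ℝ) < γ ^ 2 - 1 := by nlinarith
      rw [hφ]
      rw [div_eq_div_iff (ne_of_gt (by positivity : (0:ℝ) < (1 - (γ⁻¹) ^ 2) * (μl * (1 - μl)) * (A + B)))
        (ne_of_gt (by positivity : (0:ℝ) < (γ ^ 2 - 1) * (μl * (1 - μl)) * (A + B)))]
      field_simp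
    have h6 := hmain.congr' heq
    have hval : (A - B * 0) * (B - A * 0) / ((1 - (0:ℝ) ^ 2) * (μl * (1 - μl)) * (A + B))
        = μh * (1 - μh) / (A + B) := by
      have hAB : (A - B * 0) * (B - A * 0) = μl * (1 - μl) * (μh * (1 - μh)) := by
        rw [hA, hB]; ring
      rw [hAB]
      norm_num
      rw [mul_div_mul_left _ _ (ne_of_gt hDpos)]
    rwa [hval] at h6
  refine ⟨?_, ?_, ?_⟩
  · -- limit < 1/2
    rw [div_lt_iff₀ hABpos]
    rw [hA, hB]
    nlinarith [mul_pos (sub_pos.mpr hlh) (by linarith : (0:ℝ) < 2 * μh - 1)]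
  · -- g tendsto
    have hmain : Filter.Tendsto (fun γ : ℝ => 1 / 2 - (γ + 1)⁻¹) Filter.atTop
        (nhds (1 / 2 - 0)) :=
      tendsto_const_nhds.sub (hinv.comp (Filter.tendsto_atTop_add_const_right _ 1
        Filter.tendsto_id))
    have heq : ∀ᶠ γ : ℝ in Filter.atTop, 1 / 2 - (γ + 1)⁻¹ = g γ := by
      filter_upwards [Filter.eventually_gt_atTop 0] with γ hγ
      have : γ + 1 ≠ 0 := by linarith
      rw [hg]
      field_simp
      ring
    have := hmain.congr' heq
    simpa using this
  · -- pointwise inequality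
    intro γ hγ
    have hAB1 : 1 < A / B := (one_lt_div hBpos).mpr hBA
    have hγ1 : 1 < γ := lt_of_lt_of_le hAB1 hγ
    have ht : 0 ≤ B * γ - A := by
      rw [div_le_iff₀ hBpos] at hγ
      linarith [hγ]
    have hγ21 : 0 < γ ^ 2 - 1 := by nlinarith
    have hc : 0 < μl * (1 - μl) * (A + B) - 2 * A * B := by
      rw [hA, hB]
      nlinarith [mul_pos (mul_pos hDpos (sub_pos.mpr hlh)) (by linarith : (0:ℝ) < 2 * μh - 1)]
    have hlin : 0 < (μl * (1 - μl) * (A + B) - 2 * A * B) * A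
        + (A ^ 2 + B ^ 2 - μl * (1 - μl) * (A + B)) * B := by
      rw [hA, hB]
      nlinarith [mul_pos (mul_pos (mul_pos (sub_pos.mpr hlh) h0) (sub_pos.mpr hlh))
        (by rw [hA, hB] at hABpos; nlinarith : (0:ℝ) < μh * (1 - μl) + μl * (1 - μh))]
    have hconst : 0 < μl * (1 - μl) * (A + B) * (A - B) ^ 2 :=
      mul_pos (mul_pos hDpos hABpos) (pow_pos (by linarith) 2)
    have hB2F : 0 < B ^ 2 * (μl * (1 - μl) * (A + B) * (γ - 1) ^ 2
        - 2 * (γ * A - B) * (γ * B - A)) := by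
      nlinarith [mul_nonneg hc.le (sq_nonneg (B * γ - A)), mul_nonneg hlin.le ht, hconst]
    have hF : 0 < μl * (1 - μl) * (A + B) * (γ - 1) ^ 2
        - 2 * (γ * A - B) * (γ * B - A) := by
      rcases mul_pos_iff.mp hB2F with ⟨_, h⟩ | ⟨h, _⟩
      · exact h
      · nlinarith [sq_nonneg B]
    rw [hφ γ, hg γ]
    rw [div_lt_div_iff₀ (by positivity) (by linarith)]
    nlinarith [mul_pos (by linarith : (0:ℝ) < γ + 1) hF]
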